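/- For every integer n ≥ 1, the set Z_{n+} is an open subset of (X_d^{(c)})ⁿ, where (X_d^{(c)})ⁿ carries the topology induced from (ℂ^{d+1})ⁿ. -/

import Mathlib

noncomputable section
open Matrix Complex

namespace AdS

/-- The metric signs: +1 for indices 0 and d, −1 otherwise. -/
def eta (d : ℕ) (μ : Fin (d+1)) : ℝ := if μ = 0 ∨ μ = Fin.last d then 1 else -1

/-- The AdS bilinear form on ℝ^{d+1}. -/
def formR (d : ℕ) (x y : Fin (d+1) → ℝ) : ℝ := ∑ μ, eta d μ * x μ * y μ

/-- The ℂ-bilinear extension of the AdS form to ℂ^{d+1}. -/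
def formC (d : ℕ) (z w : Fin (d+1) → ℂ) : ℂ := ∑ μ, (eta d μ : ℂ) * z μ * w μ

/-- The real AdS quadric. -/
def Xd (d : ℕ) : Set (Fin (d+1) → ℝ) := {x | formR d x x = 1}

/-- The complex AdS quadric. -/
def XdC (d : ℕ) : Set (Fin (d+1) → ℂ) := {z | formC d z z = 1}

/-- ℓ(a∧b) : x ↦ ⟨b,x⟩a − ⟨a,x⟩b as a matrix. -/
def ell (d : ℕ) (a b : Fin (d+1) → ℝ) : Matrix (Fin (d+1)) (Fin (d+1)) ℝ :=
  Matrix.of fun i j => eta d j * (b j * a i - a j * b i)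

/-- The AdS group. -/
def Ggrp (d : ℕ) : Set (Matrix (Fin (d+1)) (Fin (d+1)) ℝ) :=
  {Λ | ∀ x y, formR d (Λ.mulVec x) (Λ.mulVec y) = formR d x y}

/-- The connected component of the identity of the AdS group. -/
def G0 (d : ℕ) : Set (Matrix (Fin (d+1)) (Fin (d+1)) ℝ) :=
  connectedComponentIn (Ggrp d) 1

/-- The set C₁ of Lie algebra generators. -/
def C1 (d : ℕ) : Set (Matrix (Fin (d+1)) (Fin (d+1)) ℝ) :=
  {M | ∃ a b : Fin (d+1) → ℝ, formR d a a = 1 ∧ formR d b b = 1 ∧ formR d a b = 0 ∧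
    0 < a 0 * b (Fin.last d) - a (Fin.last d) * b 0 ∧ M = ell d a b}

/-- The cone C₊ generated by C₁. -/
def Cplus (d : ℕ) : Set (Matrix (Fin (d+1)) (Fin (d+1)) ℝ) :=
  {M | ∃ ρ : ℝ, 0 < ρ ∧ ∃ N ∈ C1 d, M = ρ • N}

/-- A real matrix viewed as a complex one. -/
def toC (d : ℕ) (M : Matrix (Fin (d+1)) (Fin (d+1)) ℝ) : Matrix (Fin (d+1)) (Fin (d+1)) ℂ :=
  M.map Complex.ofReal

/-- A real vector viewed as a complex one. -/
def toCv (d : ℕ) (x : Fin (d+1) → ℝ) : Fin (d+1) → ℂ := fun μ => (x μ : ℂ)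

/-- The generator M₀d = ℓ(e₀ ∧ e_d). -/
def M0d (d : ℕ) : Matrix (Fin (d+1)) (Fin (d+1)) ℝ :=
  ell d (Pi.single 0 1) (Pi.single (Fin.last d) 1)

/-- The future tuboid Z₁₊ of the complex AdS quadric. -/
def Z1plus (d : ℕ) : Set (Fin (d+1) → ℂ) :=
  {z | ∃ M ∈ C1 d, ∃ c ∈ Xd d, ∃ τ : ℂ, 0 < τ.im ∧
    z = (NormedSpace.exp (τ • toC d M)).mulVec (toCv d c)}

/-- The past tuboid Z₁₋ of the complex AdS quadric. -/
def Z1minus (d : ℕ) : Set (Fin (d+1) → ℂ) :=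
  {z | ∃ M ∈ C1 d, ∃ c ∈ Xd d, ∃ τ : ℂ, τ.im < 0 ∧
    z = (NormedSpace.exp (τ • toC d M)).mulVec (toCv d c)}
/-- The ordered product `A 0 * A 1 * ⋯ * A j` of matrices. -/
def prodUpTo {d n : ℕ} (A : Fin n → Matrix (Fin (d+1)) (Fin (d+1)) ℂ) (j : Fin n) :
    Matrix (Fin (d+1)) (Fin (d+1)) ℂ :=
  (((List.finRange n).take (j.1 + 1)).map A).prod

/-- The minimal n-point future tuboid Z_{n+}. -/
def Znplus (d n : ℕ) : Set (Fin n → (Fin (d+1) → ℂ)) :=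
  {z | (∀ j, z j ∈ XdC d) ∧
    ∃ (t : Fin n → ℝ) (M : Fin n → Matrix (Fin (d+1)) (Fin (d+1)) ℝ)
      (c : Fin n → (Fin (d+1) → ℝ)),
      (∀ j, 0 < t j) ∧ (∀ j, M j ∈ C1 d) ∧ (∀ j, c j ∈ Xd d) ∧
      ∀ j, z j = (prodUpTo (fun k => NormedSpace.exp
        (((t k : ℂ) * Complex.I) • toC d (M k))) j).mulVec (toCv d (c j))}

variable {d : ℕ}
set_option linter.unusedSectionVars false

/-! ### form API -/

lemma formR_symm (x y : Fin (d+1) → ℝ) : formR d x y = formR d y x :=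
  Finset.sum_congr rfl fun μ _ => by ring

lemma formC_symm (z w : Fin (d+1) → ℂ) : formC d z w = formC d w z :=
  Finset.sum_congr rfl fun μ _ => by ring

lemma formC_add_right (z w w' : Fin (d+1) → ℂ) :
    formC d z (w + w') = formC d z w + formC d z w' := by
  simp [formC, mul_add, Finset.sum_add_distrib]

lemma formC_sub_right (z w w' : Fin (d+1) → ℂ) :
    formC d z (w - w') = formC d z w - formC d z w' := by
  simp [formC, mul_sub, Finset.sum_sub_distrib]

lemma formC_smul_right (c : ℂ) (z w : Fin (d+1) → ℂ) :
    formC d z (c • w) = c * formC d z w := by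
  simp only [formC]
  rw [Finset.mul_sum]
  exact Finset.sum_congr rfl fun μ _ => by simp; ring

lemma formC_add_left (z z' w : Fin (d+1) → ℂ) :
    formC d (z + z') w = formC d z w + formC d z' w := by
  rw [formC_symm, formC_add_right, formC_symm w z, formC_symm w z']

lemma formC_sub_left (z z' w : Fin (d+1) → ℂ) :
    formC d (z - z') w = formC d z w - formC d z' w := by
  rw [formC_symm, formC_sub_right, formC_symm w z, formC_symm w z']

lemma formC_smul_left (c : ℂ) (z w : Fin (d+1) → ℂ) :
    formC d (c • z) w = c * formC d z w := by
  rw [formC_symm, formC_smul_right, formC_symm w z]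

lemma formC_toCv (x y : Fin (d+1) → ℝ) :
    formC d (toCv d x) (toCv d y) = (formR d x y : ℂ) := by
  simp only [formC, formR, toCv]
  push_cast
  rfl

lemma formR_add_right (z w w' : Fin (d+1) → ℝ) :
    formR d z (w + w') = formR d z w + formR d z w' := by
  simp [formR, mul_add, Finset.sum_add_distrib]

lemma formR_sub_right (z w w' : Fin (d+1) → ℝ) :
    formR d z (w - w') = formR d z w - formR d z w' := by
  simp [formR, mul_sub, Finset.sum_sub_distrib]

lemma formR_smul_right (c : ℝ) (z w : Fin (d+1) → ℝ) :
    formR d z (c • w) = c * formR d z w := by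
  simp only [formR]
  rw [Finset.mul_sum]
  exact Finset.sum_congr rfl fun μ _ => by simp; ring

lemma formR_add_left (z z' w : Fin (d+1) → ℝ) :
    formR d (z + z') w = formR d z w + formR d z' w := by
  rw [formR_symm, formR_add_right, formR_symm w z, formR_symm w z']

lemma formR_sub_left (z z' w : Fin (d+1) → ℝ) :
    formR d (z - z') w = formR d z w - formR d z' w := by
  rw [formR_symm, formR_sub_right, formR_symm w z, formR_symm w z']

lemma formR_smul_left (c : ℝ) (z w : Fin (d+1) → ℝ) :
    formR d (c • z) w = c * formR d z w := by
  rw [formR_symm, formR_smul_right, formR_symm w z]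

/-! ### real/imaginary parts -/

def reV (z : Fin (d+1) → ℂ) : Fin (d+1) → ℝ := fun μ => (z μ).re
def imV (z : Fin (d+1) → ℂ) : Fin (d+1) → ℝ := fun μ => (z μ).im

lemma reim_decomp (z : Fin (d+1) → ℂ) :
    z = toCv d (reV z) + Complex.I • toCv d (imV z) := by
  funext μ
  simp [toCv, reV, imV, Complex.ext_iff]

lemma reV_mk (x y : Fin (d+1) → ℝ) : reV (toCv d x + Complex.I • toCv d y) = x := by
  funext μ; simp [toCv, reV]

lemma imV_mk (x y : Fin (d+1) → ℝ) : imV (toCv d x + Complex.I • toCv d y) = y := by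
  funext μ; simp [toCv, imV]

lemma formC_toCv_left (u : Fin (d+1) → ℝ) (ζ : Fin (d+1) → ℂ) :
    formC d (toCv d u) ζ = (formR d u (reV ζ) : ℂ) + Complex.I * (formR d u (imV ζ) : ℂ) := by
  conv_lhs => rw [reim_decomp ζ]
  rw [formC_add_right, formC_smul_right, formC_toCv, formC_toCv]

lemma mem_XdC_parts {z : Fin (d+1) → ℂ} (hz : z ∈ XdC d) :
    formR d (reV z) (reV z) - formR d (imV z) (imV z) = 1 ∧
      formR d (reV z) (imV z) = 0 := by
  have h : formC d z z = 1 := hz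
  conv_lhs at h => rw [reim_decomp z]
  rw [formC_add_left, formC_add_right, formC_add_right, formC_smul_left, formC_smul_right,
    formC_smul_right, formC_smul_left, formC_toCv, formC_toCv, formC_toCv, formC_toCv] at h
  have hre := congrArg Complex.re h
  have him := congrArg Complex.im h
  rw [formR_symm (imV z) (reV z)] at hre him
  constructor
  · simpa [sub_eq_add_neg] using hre
  · have : (2: ℝ) * formR d (reV z) (imV z) = 0 := by simpa using him
    linarith

/-! ### matrices acting on vectors -/

lemma toCv_mulVec (A : Matrix (Fin (d+1)) (Fin (d+1)) ℝ) (x : Fin (d+1) → ℝ) :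
    toC d A *ᵥ toCv d x = toCv d (A *ᵥ x) := by
  funext i
  simp only [toC, toCv, Matrix.mulVec, dotProduct, Matrix.map_apply]
  push_cast
  rfl

lemma ellC_mulVec (a b : Fin (d+1) → ℝ) (ζ : Fin (d+1) → ℂ) :
    toC d (ell d a b) *ᵥ ζ =
      formC d (toCv d b) ζ • toCv d a - formC d (toCv d a) ζ • toCv d b := by
  funext i
  simp only [toC, ell, toCv, Matrix.mulVec, dotProduct, Matrix.map_apply,
    Matrix.of_apply, Pi.sub_apply, Pi.smul_apply, smul_eq_mul, formC]
  rw [Finset.sum_mul, Finset.sum_mul, ← Finset.sum_sub_distrib]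
  refine Finset.sum_congr rfl fun μ _ => ?_
  push_cast
  ring

lemma mat_ext_mulVec {A B : Matrix (Fin (d+1)) (Fin (d+1)) ℂ}
    (h : ∀ v, A *ᵥ v = B *ᵥ v) : A = B := by
  ext i j
  simpa using congrFun (h (Pi.single j 1)) i

/-! ### the matrix E(sh, ch, a, b) -/

def Emat (d : ℕ) (sh ch : ℝ) (a b : Fin (d+1) → ℝ) : Matrix (Fin (d+1)) (Fin (d+1)) ℂ :=
  1 + ((sh : ℂ) * Complex.I) • toC d (ell d a b)
    + (1 - (ch : ℂ)) • (toC d (ell d a b) * toC d (ell d a b))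

section EmatLemmas

variable {a b : Fin (d+1) → ℝ} (ha : formR d a a = 1) (hb : formR d b b = 1)
  (hab : formR d a b = 0)

include ha hb hab

lemma ellC_mulVec_a : toC d (ell d a b) *ᵥ toCv d a = -toCv d b := by
  rw [ellC_mulVec, formC_toCv, formC_toCv, formR_symm b a, hab, ha]
  simp

lemma ellC_mulVec_b : toC d (ell d a b) *ᵥ toCv d b = toCv d a := by
  rw [ellC_mulVec, formC_toCv, formC_toCv, hab, hb]
  simp

lemma formC_AA : formC d (toCv d a) (toCv d a) = 1 := by
  rw [formC_toCv, ha]; norm_num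

lemma formC_BB : formC d (toCv d b) (toCv d b) = 1 := by
  rw [formC_toCv, hb]; norm_num

lemma formC_AB : formC d (toCv d a) (toCv d b) = 0 := by
  rw [formC_toCv, hab]; norm_num

lemma formC_BA : formC d (toCv d b) (toCv d a) = 0 := by
  rw [formC_toCv, formR_symm b a, hab]; norm_num

lemma ellC_sq_mulVec (ζ : Fin (d+1) → ℂ) :
    (toC d (ell d a b) * toC d (ell d a b)) *ᵥ ζ =
      -(formC d (toCv d a) ζ • toCv d a) - formC d (toCv d b) ζ • toCv d b := by
  rw [← Matrix.mulVec_mulVec]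
  rw [ellC_mulVec a b ζ]
  rw [Matrix.mulVec_sub, Matrix.mulVec_smul, Matrix.mulVec_smul,
    ellC_mulVec_a ha hb hab, ellC_mulVec_b ha hb hab]
  module

lemma ellC_cube :
    toC d (ell d a b) * toC d (ell d a b) * toC d (ell d a b) = -toC d (ell d a b) := by
  apply mat_ext_mulVec
  intro v
  rw [← Matrix.mulVec_mulVec]
  rw [ellC_mulVec a b v]
  rw [Matrix.mulVec_sub, Matrix.mulVec_smul, Matrix.mulVec_smul,
    ellC_sq_mulVec ha hb hab, ellC_sq_mulVec ha hb hab, Matrix.neg_mulVec, ellC_mulVec a b v]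
  simp only [formC_sub_right, formC_smul_right, formC_AA ha hb hab, formC_AB ha hb hab,
    formC_BA ha hb hab, formC_BB ha hb hab, formC_toCv]
  module

lemma Emat_mulVec (sh ch : ℝ) (ζ : Fin (d+1) → ℂ) :
    Emat d sh ch a b *ᵥ ζ = ζ
      + (((sh : ℂ) * Complex.I) * formC d (toCv d b) ζ
          - (1 - (ch : ℂ)) * formC d (toCv d a) ζ) • toCv d a
      - (((sh : ℂ) * Complex.I) * formC d (toCv d a) ζ
          + (1 - (ch : ℂ)) * formC d (toCv d b) ζ) • toCv d b := by
  unfold Emat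
  rw [Matrix.add_mulVec, Matrix.add_mulVec, Matrix.one_mulVec, Matrix.smul_mulVec,
    Matrix.smul_mulVec, ellC_mulVec, ellC_sq_mulVec ha hb hab]
  module

lemma Emat_preserves_form (sh ch : ℝ) (hch : ch^2 - sh^2 = 1) (ζ ξ : Fin (d+1) → ℂ) :
    formC d (Emat d sh ch a b *ᵥ ζ) (Emat d sh ch a b *ᵥ ξ) = formC d ζ ξ := by
  have hrel0 : ((sh:ℂ) * Complex.I)^2 + (1 - (ch:ℂ))^2 - 2 * (1 - (ch:ℂ)) = 0 := by
    have h : ((ch:ℂ))^2 - ((sh:ℂ))^2 = 1 := by exact_mod_cast hch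
    linear_combination (sh:ℂ)^2 * Complex.I_sq + h
  have h1 : formC d ζ (toCv d a) = formC d (toCv d a) ζ := formC_symm _ _
  have h2 : formC d ζ (toCv d b) = formC d (toCv d b) ζ := formC_symm _ _
  rw [Emat_mulVec ha hb hab, Emat_mulVec ha hb hab]
  simp only [formC_add_left, formC_add_right, formC_sub_left, formC_sub_right,
    formC_smul_left, formC_smul_right, formC_AA ha hb hab, formC_AB ha hb hab,
    formC_BA ha hb hab, formC_BB ha hb hab, h1, h2]
  ring_nf
  linear_combination (formC d (toCv d a) ζ * formC d (toCv d a) ξ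
    + formC d (toCv d b) ζ * formC d (toCv d b) ξ) * hrel0

lemma Emat_mulVec_cancel (sh ch : ℝ) (hch : ch^2 - sh^2 = 1) (ζ : Fin (d+1) → ℂ) :
    Emat d sh ch a b *ᵥ (Emat d (-sh) ch a b *ᵥ ζ) = ζ := by
  have hrel0 : ((sh:ℂ) * Complex.I)^2 + (1 - (ch:ℂ))^2 - 2 * (1 - (ch:ℂ)) = 0 := by
    have h : ((ch:ℂ))^2 - ((sh:ℂ))^2 = 1 := by exact_mod_cast hch
    linear_combination (sh:ℂ)^2 * Complex.I_sq + h
  rw [Emat_mulVec ha hb hab, Emat_mulVec ha hb hab]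
  simp only [formC_add_right, formC_sub_right, formC_smul_right, formC_AA ha hb hab,
    formC_AB ha hb hab, formC_BA ha hb hab, formC_BB ha hb hab]
  funext i
  simp only [Pi.add_apply, Pi.sub_apply, Pi.smul_apply, smul_eq_mul]
  push_cast
  linear_combination (formC d (toCv d a) ζ * toCv d a i
    + formC d (toCv d b) ζ * toCv d b i) * hrel0

lemma Emat_mulVec_cancel' (sh ch : ℝ) (hch : ch^2 - sh^2 = 1) (ζ : Fin (d+1) → ℂ) :
    Emat d (-sh) ch a b *ᵥ (Emat d sh ch a b *ᵥ ζ) = ζ := by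
  have h := Emat_mulVec_cancel ha hb hab (-sh) ch (by rw [neg_sq]; exact hch) ζ
  rwa [neg_neg] at h

end EmatLemmas

/-! ### the exponential formula -/

lemma exp_smul_idem (P : Matrix (Fin (d+1)) (Fin (d+1)) ℂ) (hP : P * P = P) (c : ℂ) :
    NormedSpace.exp (c • P) = 1 + (Complex.exp c - 1) • P := by
  have hpow : ∀ k : ℕ, P ^ (k + 1) = P := by
    intro k; induction k with
    | zero => simp
    | succ k ih => rw [pow_succ, ih, hP]
  have hsc : Summable fun n : ℕ => ((n.factorial : ℂ))⁻¹ * c ^ n := by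
    simpa [smul_eq_mul] using NormedSpace.expSeries_summable' (𝕂 := ℂ) (x := c)
  have hexpc : Complex.exp c = ∑' n : ℕ, ((n.factorial : ℂ))⁻¹ * c ^ n := by
    rw [Complex.exp_eq_exp_ℂ, NormedSpace.exp_eq_tsum ℂ]
    simp [smul_eq_mul]
  rw [NormedSpace.exp_eq_tsum ℂ]
  have hfun : ∀ n : ℕ, ((n.factorial : ℂ))⁻¹ • (c • P) ^ n
      = (((n.factorial : ℂ))⁻¹ * c ^ n) • P + (if n = 0 then 1 - P else 0) := by
    intro n
    cases n with
    | zero => simp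
    | succ k => simp [smul_pow, hpow k, smul_smul]
  calc (∑' n : ℕ, ((n.factorial : ℂ))⁻¹ • (c • P) ^ n)
      = ∑' n : ℕ, ((((n.factorial : ℂ))⁻¹ * c ^ n) • P + (if n = 0 then 1 - P else 0)) :=
        tsum_congr hfun
    _ = (∑' n : ℕ, (((n.factorial : ℂ))⁻¹ * c ^ n) • P) + ∑' n : ℕ, (if n = 0 then 1 - P else 0) :=
        Summable.tsum_add (hsc.smul_const P) ((hasSum_ite_eq 0 (1 - P)).summable)
    _ = (∑' n : ℕ, ((n.factorial : ℂ))⁻¹ * c ^ n) • P + (1 - P) := by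
        rw [Summable.tsum_smul_const hsc, tsum_ite_eq]
    _ = 1 + (Complex.exp c - 1) • P := by rw [← hexpc]; module

section ExpEmat

variable {a b : Fin (d+1) → ℝ} (ha : formR d a a = 1) (hb : formR d b b = 1)
  (hab : formR d a b = 0)

include ha hb hab

lemma exp_eq_Emat (t : ℝ) :
    NormedSpace.exp (((t : ℂ) * Complex.I) • toC d (ell d a b))
      = Emat d (Real.sinh t) (Real.cosh t) a b := by
  set L := toC d (ell d a b) with hLdef
  have h3 : L * L * L = -L := ellC_cube ha hb hab
  have hKK : (L*L) * (L*L) = -(L*L) := by rw [← mul_assoc, h3, neg_mul]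
  have hKL : (L*L) * L = -L := h3
  have hLK : L * (L*L) = -L := by rw [← mul_assoc]; exact h3
  set X := L * L + Complex.I • L with hXdef
  set Y := L * L - Complex.I • L with hYdef
  have hXX : X * X = (-2 : ℂ) • X := by
    rw [hXdef]
    simp only [add_mul, mul_add, smul_mul_assoc, mul_smul_comm, smul_smul,
      Complex.I_mul_I, hKK, hKL, hLK]
    match_scalars <;> (simp [Complex.ext_iff, pow_two]; try norm_num)
  have hYY : Y * Y = (-2 : ℂ) • Y := by
    rw [hYdef]
    simp only [sub_mul, mul_sub, smul_mul_assoc, mul_smul_comm, smul_smul,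
      Complex.I_mul_I, hKK, hKL, hLK]
    match_scalars <;> (simp [Complex.ext_iff, pow_two]; try norm_num)
  have hXY : X * Y = 0 := by
    rw [hXdef, hYdef]
    simp only [sub_mul, mul_sub, add_mul, mul_add, smul_mul_assoc, mul_smul_comm, smul_smul,
      Complex.I_mul_I, hKK, hKL, hLK]
    match_scalars <;> (simp [Complex.ext_iff, pow_two]; try norm_num)
  have hYX : Y * X = 0 := by
    rw [hXdef, hYdef]
    simp only [sub_mul, mul_sub, add_mul, mul_add, smul_mul_assoc, mul_smul_comm, smul_smul,
      Complex.I_mul_I, hKK, hKL, hLK]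
    match_scalars <;> (simp [Complex.ext_iff, pow_two]; try norm_num)
  set Pp := (-(1/2) : ℂ) • X with hPpdef
  set Pm := (-(1/2) : ℂ) • Y with hPmdef
  have hPp : Pp * Pp = Pp := by
    rw [hPpdef]
    simp only [smul_mul_assoc, mul_smul_comm, smul_smul, hXX]
    module
  have hPm : Pm * Pm = Pm := by
    rw [hPmdef]
    simp only [smul_mul_assoc, mul_smul_comm, smul_smul, hYY]
    module
  have hPpPm : Pp * Pm = 0 := by
    rw [hPpdef, hPmdef]
    simp only [smul_mul_assoc, mul_smul_comm, smul_smul, hXY]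
    simp
  have hcomm : Commute ((-(t : ℂ)) • Pp) ((t : ℂ) • Pm) := by
    unfold Commute SemiconjBy
    rw [hPpdef, hPmdef]
    simp only [smul_mul_assoc, mul_smul_comm, smul_smul, hXY, hYX]
    simp
  have hsplit : ((t : ℂ) * Complex.I) • L = (-(t : ℂ)) • Pp + (t : ℂ) • Pm := by
    rw [hPpdef, hPmdef, hXdef, hYdef]
    module
  rw [hsplit, Matrix.exp_add_of_commute _ _ hcomm, exp_smul_idem _ hPp, exp_smul_idem _ hPm]
  have expand : ∀ α β : ℂ, (1 + α • Pp) * (1 + β • Pm) = 1 + α • Pp + β • Pm := by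
    intro α β
    simp only [mul_add, add_mul, mul_one, one_mul, smul_mul_assoc, mul_smul_comm, smul_smul,
      hPpPm, smul_zero, add_zero]
  rw [expand]
  have hs : ((Real.sinh t : ℝ) : ℂ) = (Complex.exp (t : ℂ) - Complex.exp (-(t : ℂ))) / 2 := by
    rw [Complex.ofReal_sinh]; rfl
  have hc : ((Real.cosh t : ℝ) : ℂ) = (Complex.exp (t : ℂ) + Complex.exp (-(t : ℂ))) / 2 := by
    rw [Complex.ofReal_cosh]; rfl
  unfold Emat
  rw [← hLdef, hPpdef, hPmdef, hXdef, hYdef, hs, hc]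
  module

end ExpEmat


/-! ### signature geometry -/

lemma nonpos_of_zero_ends {w : Fin (d+1) → ℝ} (hw0 : w 0 = 0)
    (hwl : w (Fin.last d) = 0) : formR d w w ≤ 0 := by
  apply Finset.sum_nonpos
  intro μ _
  by_cases h : μ = 0 ∨ μ = Fin.last d
  · rcases h with h | h <;> subst h <;> simp [hw0, hwl]
  · simp only [eta, if_neg h]
    nlinarith [mul_self_nonneg (w μ)]

lemma perp_nonpos {a b v : Fin (d+1) → ℝ}
    (ha : formR d a a = 1) (hb : formR d b b = 1) (hab : formR d a b = 0)
    (hk : a 0 * b (Fin.last d) - a (Fin.last d) * b 0 ≠ 0)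
    (hva : formR d a v = 0) (hvb : formR d b v = 0) : formR d v v ≤ 0 := by
  set κ := a 0 * b (Fin.last d) - a (Fin.last d) * b 0 with hκ
  set c₁ := (v 0 * b (Fin.last d) - v (Fin.last d) * b 0) / κ with hc₁
  set c₂ := (a 0 * v (Fin.last d) - a (Fin.last d) * v 0) / κ with hc₂
  set w := v - c₁ • a - c₂ • b with hw
  have hw0 : w 0 = 0 := by
    rw [hw]
    simp only [Pi.sub_apply, Pi.smul_apply, smul_eq_mul, hc₁, hc₂]
    field_simp
    ring
  have hwl : w (Fin.last d) = 0 := by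
    rw [hw]
    simp only [Pi.sub_apply, Pi.smul_apply, smul_eq_mul, hc₁, hc₂]
    field_simp
    ring
  have hvv : formR d w w = formR d v v + c₁^2 + c₂^2 := by
    have h1 : formR d v a = 0 := by rw [formR_symm]; exact hva
    have h2 : formR d v b = 0 := by rw [formR_symm]; exact hvb
    have h3 : formR d b a = 0 := by rw [formR_symm]; exact hab
    rw [hw]
    simp only [formR_sub_left, formR_sub_right, formR_smul_left, formR_smul_right,
      ha, hb, hab, hva, hvb, h1, h2, h3]
    ring
  have := nonpos_of_zero_ends hw0 hwl
  nlinarith [sq_nonneg c₁, sq_nonneg c₂]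

/-! ### ell bilinearity -/

lemma ell_smul_smul (c c' : ℝ) (x y : Fin (d+1) → ℝ) :
    ell d (c • x) (c' • y) = (c * c') • ell d x y := by
  ext i j
  simp only [ell, Matrix.of_apply, Pi.smul_apply, smul_eq_mul, Matrix.smul_apply]
  ring

/-! ### prodUpTo -/

lemma prodUpTo_zero {n : ℕ} (A : Fin (n+1) → Matrix (Fin (d+1)) (Fin (d+1)) ℂ) :
    prodUpTo A 0 = A 0 := by
  unfold prodUpTo
  rw [List.finRange_succ]
  simp

lemma prodUpTo_succ {n : ℕ} (A : Fin (n+1) → Matrix (Fin (d+1)) (Fin (d+1)) ℂ) (j : Fin n) :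
    prodUpTo A j.succ = A 0 * prodUpTo (fun k => A k.succ) j := by
  unfold prodUpTo
  rw [List.finRange_succ]
  rw [Fin.val_succ, List.take_succ_cons, List.map_cons, List.prod_cons]
  congr 1
  rw [← List.map_take, List.map_map]
  rfl

/-! ### the local section data -/

def sFun (d : ℕ) (ζ : Fin (d+1) → ℂ) : ℝ := formR d (imV ζ) (imV ζ)

def etFun (d : ℕ) (e₀ : Fin (d+1) → ℝ) (ζ : Fin (d+1) → ℂ) : Fin (d+1) → ℝ :=
  e₀ - (formR d e₀ (imV ζ) / sFun d ζ) • imV ζ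

def qFun (d : ℕ) (e₀ : Fin (d+1) → ℝ) (ζ : Fin (d+1) → ℂ) : ℝ :=
  formR d (etFun d e₀ ζ) (etFun d e₀ ζ)

def evFun (d : ℕ) (e₀ : Fin (d+1) → ℝ) (ζ : Fin (d+1) → ℂ) : Fin (d+1) → ℝ :=
  Real.sqrt (sFun d ζ / qFun d e₀ ζ) • etFun d e₀ ζ

def lamFun (d : ℕ) (e₀ : Fin (d+1) → ℝ) (ζ : Fin (d+1) → ℂ) : ℝ :=
  -(formR d (reV ζ) (evFun d e₀ ζ)) / sFun d ζ

def DyeFun (d : ℕ) (e₀ : Fin (d+1) → ℝ) (ζ : Fin (d+1) → ℂ) : ℝ :=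
  imV ζ (Fin.last d) * evFun d e₀ ζ 0 - imV ζ 0 * evFun d e₀ ζ (Fin.last d)

def delFun (d : ℕ) (e₀ : Fin (d+1) → ℝ) (ζ : Fin (d+1) → ℂ) : ℝ :=
  Real.sqrt ((lamFun d e₀ ζ)^2 - 1)

def shFun (d : ℕ) (e₀ : Fin (d+1) → ℝ) (ζ : Fin (d+1) → ℂ) : ℝ := (delFun d e₀ ζ)⁻¹

def chFun (d : ℕ) (e₀ : Fin (d+1) → ℝ) (ζ : Fin (d+1) → ℂ) : ℝ :=
  lamFun d e₀ ζ * shFun d e₀ ζ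

def avFun (d : ℕ) (ζ : Fin (d+1) → ℂ) : Fin (d+1) → ℝ :=
  (Real.sqrt (sFun d ζ))⁻¹ • imV ζ

def bvFun (d : ℕ) (e₀ : Fin (d+1) → ℝ) (ζ : Fin (d+1) → ℂ) : Fin (d+1) → ℝ :=
  (-(Real.sqrt (sFun d ζ))⁻¹) • evFun d e₀ ζ

section SectionProps

variable {e₀ : Fin (d+1) → ℝ} {ζ : Fin (d+1) → ℂ}

lemma formR_y_et (hs : 0 < sFun d ζ) : formR d (imV ζ) (etFun d e₀ ζ) = 0 := by
  unfold etFun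
  rw [formR_sub_right, formR_smul_right]
  have h1 : formR d (imV ζ) (imV ζ) = sFun d ζ := rfl
  rw [h1, div_mul_cancel₀ _ (ne_of_gt hs), formR_symm]
  ring

lemma formR_y_ev (hs : 0 < sFun d ζ) : formR d (imV ζ) (evFun d e₀ ζ) = 0 := by
  unfold evFun
  rw [formR_smul_right, formR_y_et hs, mul_zero]

lemma formR_ev_ev (hs : 0 < sFun d ζ) (hq : 0 < qFun d e₀ ζ) :
    formR d (evFun d e₀ ζ) (evFun d e₀ ζ) = sFun d ζ := by
  unfold evFun
  rw [formR_smul_left, formR_smul_right]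
  have h1 : formR d (etFun d e₀ ζ) (etFun d e₀ ζ) = qFun d e₀ ζ := rfl
  rw [h1, ← mul_assoc, Real.mul_self_sqrt (by positivity)]
  field_simp

lemma av_norm (hs : 0 < sFun d ζ) : formR d (avFun d ζ) (avFun d ζ) = 1 := by
  unfold avFun
  rw [formR_smul_left, formR_smul_right]
  have h1 : formR d (imV ζ) (imV ζ) = sFun d ζ := rfl
  have hS : Real.sqrt (sFun d ζ) * Real.sqrt (sFun d ζ) = sFun d ζ := Real.mul_self_sqrt hs.le
  have hSne : Real.sqrt (sFun d ζ) ≠ 0 := by positivity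
  rw [h1]
  field_simp
  rw [Real.sq_sqrt hs.le]

lemma bv_norm (hs : 0 < sFun d ζ) (hq : 0 < qFun d e₀ ζ) :
    formR d (bvFun d e₀ ζ) (bvFun d e₀ ζ) = 1 := by
  unfold bvFun
  rw [formR_smul_left, formR_smul_right, formR_ev_ev hs hq]
  have hS : Real.sqrt (sFun d ζ) * Real.sqrt (sFun d ζ) = sFun d ζ := Real.mul_self_sqrt hs.le
  have hSne : Real.sqrt (sFun d ζ) ≠ 0 := by positivity
  field_simp
  rw [Real.sq_sqrt hs.le]

lemma av_bv_ortho (hs : 0 < sFun d ζ) : formR d (avFun d ζ) (bvFun d e₀ ζ) = 0 := by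
  unfold avFun bvFun
  rw [formR_smul_left, formR_smul_right, formR_y_ev hs]
  ring

lemma av_bv_kappa (hs : 0 < sFun d ζ) (hDye : 0 < DyeFun d e₀ ζ) :
    0 < avFun d ζ 0 * bvFun d e₀ ζ (Fin.last d)
      - avFun d ζ (Fin.last d) * bvFun d e₀ ζ 0 := by
  have heq : avFun d ζ 0 * bvFun d e₀ ζ (Fin.last d)
      - avFun d ζ (Fin.last d) * bvFun d e₀ ζ 0
      = ((Real.sqrt (sFun d ζ))⁻¹)^2 * DyeFun d e₀ ζ := by
    unfold avFun bvFun DyeFun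
    simp only [Pi.smul_apply, smul_eq_mul]
    ring
  rw [heq]
  have h1 : 0 < (Real.sqrt (sFun d ζ))⁻¹ := by positivity
  exact mul_pos (pow_pos h1 2) hDye

lemma del_pos (hlam : 1 < lamFun d e₀ ζ) : 0 < delFun d e₀ ζ :=
  Real.sqrt_pos.2 (by nlinarith)

lemma del_sq (hlam : 1 < lamFun d e₀ ζ) :
    (delFun d e₀ ζ)^2 = (lamFun d e₀ ζ)^2 - 1 :=
  Real.sq_sqrt (by nlinarith)

lemma sh_pos (hlam : 1 < lamFun d e₀ ζ) : 0 < shFun d e₀ ζ :=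
  inv_pos.2 (del_pos hlam)

lemma ch_pos (hlam : 1 < lamFun d e₀ ζ) : 0 < chFun d e₀ ζ :=
  mul_pos (by linarith) (sh_pos hlam)

lemma ch_sq (hlam : 1 < lamFun d e₀ ζ) :
    (chFun d e₀ ζ)^2 - (shFun d e₀ ζ)^2 = 1 := by
  have h1 := del_sq (ζ := ζ) (e₀ := e₀) hlam
  have h2 := del_pos (ζ := ζ) (e₀ := e₀) hlam
  unfold chFun shFun
  have hne : delFun d e₀ ζ ≠ 0 := ne_of_gt h2
  field_simp
  linarith [h1]

lemma section_member (hs : 0 < sFun d ζ) (hq : 0 < qFun d e₀ ζ)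
    (hlam : 1 < lamFun d e₀ ζ) (hζ : ζ ∈ XdC d) :
    ∃ c', formR d c' c' = 1 ∧
      Emat d (shFun d e₀ ζ) (chFun d e₀ ζ) (avFun d ζ) (bvFun d e₀ ζ) *ᵥ toCv d c' = ζ := by
  have hxy : formR d (reV ζ) (imV ζ) = 0 := (mem_XdC_parts hζ).2
  set S := Real.sqrt (sFun d ζ) with hSdef
  have hSpos : 0 < S := Real.sqrt_pos.2 hs
  have hSne : S ≠ 0 := ne_of_gt hSpos
  have hS2 : S * S = sFun d ζ := Real.mul_self_sqrt hs.le
  set lam := lamFun d e₀ ζ with hlamdef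
  set del := delFun d e₀ ζ with hdeldef
  have hdelpos : 0 < del := del_pos hlam
  have hdelne : del ≠ 0 := ne_of_gt hdelpos
  have hxev : formR d (reV ζ) (evFun d e₀ ζ) = -(lam * sFun d ζ) := by
    have : lam = -(formR d (reV ζ) (evFun d e₀ ζ)) / sFun d ζ := rfl
    rw [this]
    field_simp
  set c' := reV ζ + (lam - del) • evFun d e₀ ζ with hc'def
  have hp_c : formR d (avFun d ζ) c' = 0 := by
    unfold avFun
    rw [formR_smul_left, hc'def, formR_add_right, formR_smul_right, formR_y_ev hs,
      formR_symm (imV ζ) (reV ζ), hxy]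
    ring
  have hq_c : formR d (bvFun d e₀ ζ) c' = del * S := by
    unfold bvFun
    rw [formR_smul_left, hc'def, formR_add_right, formR_smul_right,
      formR_symm (evFun d e₀ ζ) (reV ζ), hxev, formR_ev_ev hs hq, ← hS2]
    field_simp
    rw [Real.sqrt_sq hSpos.le]
    ring
  have hkey : Emat d (shFun d e₀ ζ) (chFun d e₀ ζ) (avFun d ζ) (bvFun d e₀ ζ) *ᵥ toCv d c'
      = ζ := by
    rw [Emat_mulVec (av_norm hs) (bv_norm hs hq) (av_bv_ortho hs), formC_toCv, formC_toCv,
      hp_c, hq_c]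
    conv_rhs => rw [reim_decomp ζ]
    funext i
    have hshdef' : shFun d e₀ ζ = del⁻¹ := rfl
    have hchdef' : chFun d e₀ ζ = lam * del⁻¹ := rfl
    simp only [hc'def, hshdef', hchdef', avFun, bvFun, toCv, Pi.add_apply, Pi.sub_apply,
      Pi.smul_apply, smul_eq_mul, ← hSdef]
    push_cast
    have hdelneC : (del : ℂ) ≠ 0 := by exact_mod_cast hdelne
    have hSneC : ((S : ℝ) : ℂ) ≠ 0 := by exact_mod_cast hSne
    field_simp
    ring
  refine ⟨c', ?_, hkey⟩
  have hpres := Emat_preserves_form (av_norm hs) (bv_norm hs hq) (av_bv_ortho hs)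
    (shFun d e₀ ζ) (chFun d e₀ ζ) (ch_sq hlam) (toCv d c') (toCv d c')
  rw [hkey, formC_toCv] at hpres
  have hζ1 : formC d ζ ζ = 1 := hζ
  rw [hζ1] at hpres
  exact_mod_cast hpres.symm

end SectionProps


/-! ### values at the basepoint -/

set_option maxHeartbeats 1000000 in
lemma z0_all {t₀ : ℝ} {a₁ b₁ c₀ : Fin (d+1) → ℝ} (ht : 0 < t₀)
    (ha : formR d a₁ a₁ = 1) (hb : formR d b₁ b₁ = 1) (hab : formR d a₁ b₁ = 0)
    (hk : 0 < a₁ 0 * b₁ (Fin.last d) - a₁ (Fin.last d) * b₁ 0)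
    (hc : formR d c₀ c₀ = 1) :
    ∀ e₀ z₀, e₀ = (-(Real.sinh t₀)) • (formR d a₁ c₀ • a₁ + formR d b₁ c₀ • b₁) →
    z₀ = Emat d (Real.sinh t₀) (Real.cosh t₀) a₁ b₁ *ᵥ toCv d c₀ →
    (0 < sFun d z₀ ∧ 0 < qFun d e₀ z₀ ∧ 1 < lamFun d e₀ z₀ ∧ 0 < DyeFun d e₀ z₀)
    ∧ shFun d e₀ z₀ = Real.sinh t₀ ∧ chFun d e₀ z₀ = Real.cosh t₀
    ∧ ell d (avFun d z₀) (bvFun d e₀ z₀) = ell d a₁ b₁ := by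
  intro e₀ z₀ he₀ hz₀
  have hsinh : 0 < Real.sinh t₀ := Real.sinh_pos_iff.2 ht
  set α₁ := formR d a₁ c₀ with hα
  set β₁ := formR d b₁ c₀ with hβ
  set r2 := α₁^2 + β₁^2 with hr2def
  set w₁ := α₁ • a₁ + β₁ • b₁ with hw₁
  set u₁ := β₁ • a₁ - α₁ • b₁ with hu₁
  set xr := c₀ + (Real.cosh t₀ - 1) • w₁ with hxr
  set yi := Real.sinh t₀ • u₁ with hyi
  have hba : formR d b₁ a₁ = 0 := by rw [formR_symm]; exact hab
  have hca : formR d c₀ a₁ = α₁ := by rw [formR_symm]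
  have hcb : formR d c₀ b₁ = β₁ := by rw [formR_symm]
  -- decomposition of z₀
  have hz0decomp : z₀ = toCv d xr + Complex.I • toCv d yi := by
    rw [hz₀, Emat_mulVec ha hb hab, formC_toCv, formC_toCv, ← hα, ← hβ]
    funext i
    simp only [hxr, hyi, hw₁, hu₁, toCv, Pi.add_apply, Pi.sub_apply, Pi.smul_apply,
      smul_eq_mul]
    push_cast
    ring
  have hre : reV z₀ = xr := by rw [hz0decomp]; exact reV_mk _ _
  have him : imV z₀ = yi := by rw [hz0decomp]; exact imV_mk _ _
  -- form values
  have huu : formR d u₁ u₁ = r2 := by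
    rw [hu₁]
    simp only [formR_sub_left, formR_sub_right, formR_smul_left, formR_smul_right,
      ha, hb, hab, hba]
    rw [hr2def]; ring
  have hww : formR d w₁ w₁ = r2 := by
    rw [hw₁]
    simp only [formR_add_left, formR_add_right, formR_smul_left, formR_smul_right,
      ha, hb, hab, hba]
    rw [hr2def]; ring
  have hwu : formR d w₁ u₁ = 0 := by
    rw [hw₁, hu₁]
    simp only [formR_add_left, formR_sub_right, formR_smul_left, formR_smul_right,
      ha, hb, hab, hba]
    ring
  have hcw : formR d c₀ w₁ = r2 := by
    rw [hw₁]
    simp only [formR_add_right, formR_smul_right, hca, hcb]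
    rw [hr2def]; ring
  -- r2 ≥ 1
  have hva : formR d a₁ (c₀ - w₁) = 0 := by
    rw [formR_sub_right, hw₁, formR_add_right, formR_smul_right, formR_smul_right,
      ha, hab, ← hα]
    ring
  have hvb : formR d b₁ (c₀ - w₁) = 0 := by
    rw [formR_sub_right, hw₁, formR_add_right, formR_smul_right, formR_smul_right,
      hb, hba, ← hβ]
    ring
  have hvv := perp_nonpos ha hb hab (ne_of_gt hk) hva hvb
  have hvv' : formR d (c₀ - w₁) (c₀ - w₁) = 1 - r2 := by
    have hwc : formR d w₁ c₀ = r2 := by rw [formR_symm]; exact hcw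
    simp only [formR_sub_left, formR_sub_right, hc, hcw, hwc, hww]
    ring
  have hr2 : 1 ≤ r2 := by rw [hvv'] at hvv; linarith
  have hr2pos : 0 < r2 := by linarith
  -- the four open conditions
  have hs0 : sFun d z₀ = Real.sinh t₀^2 * r2 := by
    unfold sFun
    rw [him, hyi, formR_smul_left, formR_smul_right, huu]
    ring
  have hs0pos : 0 < sFun d z₀ := by rw [hs0]; positivity
  have hey : formR d e₀ yi = 0 := by
    rw [he₀, hyi]
    simp only [formR_smul_left, formR_smul_right, hwu]
    ring
  have het : etFun d e₀ z₀ = e₀ := by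
    unfold etFun
    rw [him, hey]
    simp
  have hq0 : qFun d e₀ z₀ = Real.sinh t₀^2 * r2 := by
    unfold qFun
    rw [het, he₀]
    simp only [formR_smul_left, formR_smul_right, hww]
    ring
  have hq0' : qFun d e₀ z₀ = sFun d z₀ := by rw [hq0, hs0]
  have hq0pos : 0 < qFun d e₀ z₀ := by rw [hq0']; exact hs0pos
  have hev : evFun d e₀ z₀ = e₀ := by
    unfold evFun
    rw [het, hq0', div_self (ne_of_gt hs0pos), Real.sqrt_one, one_smul]
  have hxre : formR d xr e₀ = -(Real.sinh t₀ * (Real.cosh t₀ * r2)) := by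
    rw [hxr, he₀]
    simp only [formR_add_left, formR_add_right, formR_smul_left, formR_smul_right, hcw, hww]
    ring
  have hlam0 : lamFun d e₀ z₀ = Real.cosh t₀ / Real.sinh t₀ := by
    unfold lamFun
    rw [hre, hev, hxre, hs0]
    field_simp
  have hlam1 : 1 < lamFun d e₀ z₀ := by
    rw [hlam0, lt_div_iff₀ hsinh, one_mul]
    nlinarith [Real.cosh_sub_sinh t₀, Real.exp_pos (-t₀)]
  have hDye0 : DyeFun d e₀ z₀
      = Real.sinh t₀^2 * r2 * (a₁ 0 * b₁ (Fin.last d) - a₁ (Fin.last d) * b₁ 0) := by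
    unfold DyeFun
    rw [him, hev, hyi, he₀]
    rw [hu₁, hw₁]
    simp only [Pi.smul_apply, Pi.add_apply, Pi.sub_apply, smul_eq_mul, hr2def]
    ring
  have hDyepos : 0 < DyeFun d e₀ z₀ := by
    rw [hDye0]; positivity
  -- matching values
  have hdel0 : delFun d e₀ z₀ = (Real.sinh t₀)⁻¹ := by
    unfold delFun
    rw [hlam0]
    have h1 : (Real.cosh t₀ / Real.sinh t₀)^2 - 1 = ((Real.sinh t₀)⁻¹)^2 := by
      have h2 := Real.cosh_sq_sub_sinh_sq t₀
      field_simp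
      try linear_combination h2
    rw [h1, Real.sqrt_sq (by positivity)]
  have hsh0 : shFun d e₀ z₀ = Real.sinh t₀ := by
    unfold shFun
    rw [hdel0, inv_inv]
  have hch0 : chFun d e₀ z₀ = Real.cosh t₀ := by
    unfold chFun shFun
    rw [hdel0, hlam0, inv_inv]
    field_simp
  have hellyi : ell d yi e₀ = (-(Real.sinh t₀^2 * r2)) • ell d a₁ b₁ := by
    ext i j
    simp only [ell, Matrix.of_apply, Matrix.smul_apply, smul_eq_mul, hyi, hu₁, he₀, hw₁,
      Pi.smul_apply, Pi.add_apply, Pi.sub_apply, hr2def]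
    ring
  have hEll0 : ell d (avFun d z₀) (bvFun d e₀ z₀) = ell d a₁ b₁ := by
    unfold avFun bvFun
    rw [him, hev, ell_smul_smul, hellyi, smul_smul]
    have hS2 : Real.sqrt (sFun d z₀) * Real.sqrt (sFun d z₀) = Real.sinh t₀^2 * r2 := by
      rw [Real.mul_self_sqrt hs0pos.le, hs0]
    have hSne : Real.sqrt (sFun d z₀) ≠ 0 := by positivity
    have hco : (Real.sqrt (sFun d z₀))⁻¹ * -(Real.sqrt (sFun d z₀))⁻¹
        * -(Real.sinh t₀^2 * r2) = 1 := by
      rw [← hS2]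
      field_simp
    rw [hco, one_smul]
  exact ⟨⟨hs0pos, hq0pos, hlam1, hDyepos⟩, hsh0, hch0, hEll0⟩

/-! ### continuity and the open set Ω -/

lemma continuous_reV : Continuous (reV (d := d)) :=
  continuous_pi fun i => Complex.continuous_re.comp (continuous_apply i)

lemma continuous_imV : Continuous (imV (d := d)) :=
  continuous_pi fun i => Complex.continuous_im.comp (continuous_apply i)

lemma continuous_formR_comp {α : Type*} [TopologicalSpace α]
    {f g : α → (Fin (d+1) → ℝ)} (hf : Continuous f) (hg : Continuous g) :
    Continuous fun x => formR d (f x) (g x) := by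
  unfold formR
  exact continuous_finset_sum _ fun i _ =>
    (continuous_const.mul ((continuous_apply i).comp hf)).mul ((continuous_apply i).comp hg)

lemma continuousOn_formR_comp {α : Type*} [TopologicalSpace α]
    {f g : α → (Fin (d+1) → ℝ)} {s : Set α}
    (hf : ContinuousOn f s) (hg : ContinuousOn g s) :
    ContinuousOn (fun x => formR d (f x) (g x)) s := by
  unfold formR
  exact continuousOn_finset_sum _ fun i _ =>
    (continuousOn_const.mul ((continuous_apply i).comp_continuousOn hf)).mul
      ((continuous_apply i).comp_continuousOn hg)

def OmegaFun (d : ℕ) (e₀ : Fin (d+1) → ℝ) : Set (Fin (d+1) → ℂ) :=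
  (({ζ | 0 < sFun d ζ} ∩ qFun d e₀ ⁻¹' Set.Ioi 0) ∩ lamFun d e₀ ⁻¹' Set.Ioi 1)
    ∩ DyeFun d e₀ ⁻¹' Set.Ioi 0

lemma mem_Omega_iff {e₀ : Fin (d+1) → ℝ} {ζ : Fin (d+1) → ℂ} :
    ζ ∈ OmegaFun d e₀ ↔
      0 < sFun d ζ ∧ 0 < qFun d e₀ ζ ∧ 1 < lamFun d e₀ ζ ∧ 0 < DyeFun d e₀ ζ := by
  simp only [OmegaFun, Set.mem_inter_iff, Set.mem_setOf_eq, Set.mem_preimage, Set.mem_Ioi]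
  tauto

lemma continuous_sFun : Continuous (sFun d) :=
  continuous_formR_comp continuous_imV continuous_imV

lemma isOpen_s : IsOpen {ζ : Fin (d+1) → ℂ | 0 < sFun d ζ} :=
  isOpen_lt continuous_const continuous_sFun

lemma continuousOn_etFun (e₀ : Fin (d+1) → ℝ) :
    ContinuousOn (etFun d e₀) {ζ | 0 < sFun d ζ} := by
  unfold etFun
  exact continuousOn_const.sub
    (((continuousOn_formR_comp continuousOn_const continuous_imV.continuousOn).div
      continuous_sFun.continuousOn fun ζ hζ => ne_of_gt hζ).smul continuous_imV.continuousOn)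

lemma continuousOn_qFun (e₀ : Fin (d+1) → ℝ) :
    ContinuousOn (qFun d e₀) {ζ | 0 < sFun d ζ} :=
  continuousOn_formR_comp (continuousOn_etFun e₀) (continuousOn_etFun e₀)

lemma isOpen_sq (e₀ : Fin (d+1) → ℝ) :
    IsOpen ({ζ | 0 < sFun d ζ} ∩ qFun d e₀ ⁻¹' Set.Ioi 0) :=
  (continuousOn_qFun e₀).isOpen_inter_preimage isOpen_s isOpen_Ioi

lemma continuousOn_evFun (e₀ : Fin (d+1) → ℝ) :
    ContinuousOn (evFun d e₀) ({ζ | 0 < sFun d ζ} ∩ qFun d e₀ ⁻¹' Set.Ioi 0) := by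
  unfold evFun
  refine ContinuousOn.smul (M := ℝ) ?_ ((continuousOn_etFun e₀).mono Set.inter_subset_left)
  refine Real.continuous_sqrt.comp_continuousOn ?_
  exact (continuous_sFun.continuousOn.mono Set.inter_subset_left).div
    ((continuousOn_qFun e₀).mono Set.inter_subset_left) fun ζ hζ => ne_of_gt hζ.2

lemma continuousOn_lamFun (e₀ : Fin (d+1) → ℝ) :
    ContinuousOn (lamFun d e₀) ({ζ | 0 < sFun d ζ} ∩ qFun d e₀ ⁻¹' Set.Ioi 0) := by
  unfold lamFun
  exact ((continuousOn_formR_comp continuous_reV.continuousOn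
    (continuousOn_evFun e₀)).neg).div (continuous_sFun.continuousOn.mono Set.inter_subset_left)
    fun ζ hζ => ne_of_gt hζ.1

lemma continuousOn_DyeFun (e₀ : Fin (d+1) → ℝ) :
    ContinuousOn (DyeFun d e₀) ({ζ | 0 < sFun d ζ} ∩ qFun d e₀ ⁻¹' Set.Ioi 0) := by
  unfold DyeFun
  exact (((continuous_apply (Fin.last d)).comp
      continuous_imV).continuousOn.mul
      ((continuous_apply 0).comp_continuousOn (continuousOn_evFun e₀))).sub
    (((continuous_apply 0).comp continuous_imV).continuousOn.mul
      ((continuous_apply (Fin.last d)).comp_continuousOn (continuousOn_evFun e₀)))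

lemma isOpen_Omega (e₀ : Fin (d+1) → ℝ) : IsOpen (OmegaFun d e₀) := by
  unfold OmegaFun
  have h3 : IsOpen (({ζ | 0 < sFun d ζ} ∩ qFun d e₀ ⁻¹' Set.Ioi 0)
      ∩ lamFun d e₀ ⁻¹' Set.Ioi 1) :=
    (continuousOn_lamFun e₀).isOpen_inter_preimage (isOpen_sq e₀) isOpen_Ioi
  exact (((continuousOn_DyeFun e₀).mono Set.inter_subset_left).isOpen_inter_preimage
    h3 isOpen_Ioi)

lemma Omega_subset_sq (e₀ : Fin (d+1) → ℝ) :
    OmegaFun d e₀ ⊆ ({ζ | 0 < sFun d ζ} ∩ qFun d e₀ ⁻¹' Set.Ioi 0) :=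
  fun _ h => h.1.1

lemma continuous_ellC : Continuous (fun p : (Fin (d+1) → ℝ) × (Fin (d+1) → ℝ) =>
    toC d (ell d p.1 p.2)) := by
  apply continuous_matrix
  intro i j
  apply Complex.continuous_ofReal.comp
  show Continuous fun p : (Fin (d+1) → ℝ) × (Fin (d+1) → ℝ) =>
    eta d j * (p.2 j * p.1 i - p.1 j * p.2 i)
  exact continuous_const.mul
    ((((continuous_apply j).comp continuous_snd).mul
      ((continuous_apply i).comp continuous_fst)).sub
    (((continuous_apply j).comp continuous_fst).mul
      ((continuous_apply i).comp continuous_snd)))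

set_option maxHeartbeats 2000000 in
lemma continuousOn_inv_Emat (e₀ : Fin (d+1) → ℝ) :
    ContinuousOn (fun ζ => Emat d (-(shFun d e₀ ζ)) (chFun d e₀ ζ) (avFun d ζ)
      (bvFun d e₀ ζ)) (OmegaFun d e₀) := by
  have hmono := Omega_subset_sq (d := d) e₀
  have hscontOn : ContinuousOn (sFun d) (OmegaFun d e₀) := continuous_sFun.continuousOn
  have hspos : ∀ ζ ∈ OmegaFun d e₀, 0 < sFun d ζ := fun ζ hζ => (mem_Omega_iff.1 hζ).1
  have hsqrtne : ∀ ζ ∈ OmegaFun d e₀, Real.sqrt (sFun d ζ) ≠ 0 := fun ζ hζ => by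
    have := hspos ζ hζ; positivity
  have hav : ContinuousOn (avFun d) (OmegaFun d e₀) := by
    unfold avFun
    exact ((Real.continuous_sqrt.comp_continuousOn hscontOn).inv₀ hsqrtne).smul (M := ℝ)
      continuous_imV.continuousOn
  have hbv : ContinuousOn (bvFun d e₀) (OmegaFun d e₀) := by
    unfold bvFun
    exact (((Real.continuous_sqrt.comp_continuousOn hscontOn).inv₀ hsqrtne).neg).smul (M := ℝ)
      ((continuousOn_evFun e₀).mono hmono)
  have hlam : ContinuousOn (lamFun d e₀) (OmegaFun d e₀) := (continuousOn_lamFun e₀).mono hmono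
  have hdel : ContinuousOn (delFun d e₀) (OmegaFun d e₀) := by
    unfold delFun
    exact Real.continuous_sqrt.comp_continuousOn ((hlam.pow 2).sub continuousOn_const)
  have hdelne : ∀ ζ ∈ OmegaFun d e₀, delFun d e₀ ζ ≠ 0 := fun ζ hζ =>
    ne_of_gt (del_pos (mem_Omega_iff.1 hζ).2.2.1)
  have hsh : ContinuousOn (shFun d e₀) (OmegaFun d e₀) := hdel.inv₀ hdelne
  have hch : ContinuousOn (chFun d e₀) (OmegaFun d e₀) := hlam.mul hsh
  have hL : ContinuousOn (fun ζ => toC d (ell d (avFun d ζ) (bvFun d e₀ ζ)))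
      (OmegaFun d e₀) := continuous_ellC.comp_continuousOn (hav.prodMk hbv)
  unfold Emat
  refine ContinuousOn.add (ContinuousOn.add continuousOn_const ?_) ?_
  · exact (((Complex.continuous_ofReal.comp_continuousOn hsh.neg)).mul
      continuousOn_const).smul hL
  · exact (continuousOn_const.sub
      (Complex.continuous_ofReal.comp_continuousOn hch)).smul (hL.mul hL)


/-! ### the main induction -/

lemma continuousOn_mulVec {α : Type*} [TopologicalSpace α]
    {f : α → Matrix (Fin (d+1)) (Fin (d+1)) ℂ} {g : α → (Fin (d+1) → ℂ)} {s : Set α}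
    (hf : ContinuousOn f s) (hg : ContinuousOn g s) :
    ContinuousOn (fun x => f x *ᵥ g x) s := by
  apply continuousOn_pi.2
  intro i
  show ContinuousOn (fun x => ∑ k, f x i k * g x k) s
  apply continuousOn_finset_sum
  intro k _
  exact (((continuous_apply k).comp (continuous_apply i)).comp_continuousOn hf).mul
    ((continuous_apply k).comp_continuousOn hg)

set_option maxHeartbeats 2000000 in
lemma Znplus_locally_open (d : ℕ) : ∀ (n : ℕ) (z : Fin n → (Fin (d+1) → ℂ)),
    z ∈ Znplus d n →
    ∃ W, IsOpen W ∧ z ∈ W ∧ ∀ z' ∈ W, (∀ j, z' j ∈ XdC d) → z' ∈ Znplus d n := by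
  intro n
  induction n with
  | zero =>
    intro z _
    refine ⟨Set.univ, isOpen_univ, trivial, ?_⟩
    intro z' _ hQ
    exact ⟨hQ, Fin.elim0, Fin.elim0, Fin.elim0, fun j => j.elim0, fun j => j.elim0,
      fun j => j.elim0, fun j => j.elim0⟩
  | succ n IH =>
    intro z hz
    obtain ⟨hQ, t, M, c, ht, hM, hcX, hzj⟩ := hz
    obtain ⟨a₁, b₁, ha, hb, hab, hk, hM0⟩ := hM 0
    have hc0 : formR d (c 0) (c 0) = 1 := hcX 0
    have hch2 : (Real.cosh (t 0))^2 - (Real.sinh (t 0))^2 = 1 := Real.cosh_sq_sub_sinh_sq _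
    have hch2' : (Real.cosh (t 0))^2 - (-Real.sinh (t 0))^2 = 1 := by
      rw [neg_sq]; exact hch2
    have hz0 : z 0 = Emat d (Real.sinh (t 0)) (Real.cosh (t 0)) a₁ b₁ *ᵥ toCv d (c 0) := by
      have h := hzj 0
      rw [prodUpTo_zero] at h
      rw [h, hM0, exp_eq_Emat ha hb hab]
    set e₀ := (-(Real.sinh (t 0))) • (formR d a₁ (c 0) • a₁ + formR d b₁ (c 0) • b₁)
      with he₀def
    obtain ⟨⟨hs0, hq0, hlam0, hDye0⟩, hsh0, hch0, hEll0⟩ :=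
      z0_all (ht 0) ha hb hab hk hc0 e₀ (z 0) he₀def hz0
    have hz0Ω : z 0 ∈ OmegaFun d e₀ := mem_Omega_iff.2 ⟨hs0, hq0, hlam0, hDye0⟩
    have hmatch : Emat d (-(shFun d e₀ (z 0))) (chFun d e₀ (z 0)) (avFun d (z 0))
        (bvFun d e₀ (z 0)) = Emat d (-(Real.sinh (t 0))) (Real.cosh (t 0)) a₁ b₁ := by
      unfold Emat
      rw [hsh0, hch0, hEll0]
    set w : Fin n → (Fin (d+1) → ℂ) := fun j =>
      Emat d (-(Real.sinh (t 0))) (Real.cosh (t 0)) a₁ b₁ *ᵥ z j.succ with hwdef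
    have hwXdC : ∀ j, w j ∈ XdC d := by
      intro j
      show formC d (w j) (w j) = 1
      rw [hwdef]
      dsimp only
      rw [Emat_preserves_form ha hb hab _ _ hch2']
      exact hQ j.succ
    have hwtail : ∀ j : Fin n, w j = (prodUpTo (fun k => NormedSpace.exp
        (((((t ∘ Fin.succ) k : ℝ) : ℂ) * Complex.I) • toC d ((M ∘ Fin.succ) k))) j).mulVec
        (toCv d ((c ∘ Fin.succ) j)) := by
      intro j
      rw [hwdef]
      dsimp only
      have h := hzj j.succ
      rw [prodUpTo_succ] at h
      rw [h, hM0, exp_eq_Emat ha hb hab, ← Matrix.mulVec_mulVec,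
        Emat_mulVec_cancel' ha hb hab _ _ hch2]
      rfl
    have hwZ : w ∈ Znplus d n := ⟨hwXdC, t ∘ Fin.succ, M ∘ Fin.succ, c ∘ Fin.succ,
      fun j => ht j.succ, fun j => hM j.succ, fun j => hcX j.succ, by
        intro j
        have h := hwtail j
        convert h using 3⟩
    obtain ⟨W', hW'open, hW'mem, hW'sub⟩ := IH w hwZ
    set T : (Fin (n+1) → (Fin (d+1) → ℂ)) → (Fin n → (Fin (d+1) → ℂ)) := fun z' j =>
      Emat d (-(shFun d e₀ (z' 0))) (chFun d e₀ (z' 0)) (avFun d (z' 0)) (bvFun d e₀ (z' 0))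
        *ᵥ z' j.succ with hTdef
    set A : Set (Fin (n+1) → (Fin (d+1) → ℂ)) := (fun z' => z' 0) ⁻¹' (OmegaFun d e₀)
      with hAdef
    have hAopen : IsOpen A := (isOpen_Omega e₀).preimage (continuous_apply 0)
    have hTcont : ContinuousOn T A := by
      apply continuousOn_pi.2
      intro j
      apply continuousOn_mulVec
      · exact (continuousOn_inv_Emat e₀).comp (continuous_apply 0).continuousOn
          (fun z' hz' => hz')
      · exact (continuous_apply j.succ).continuousOn
    have hTz : T z = w := by
      funext j
      rw [hTdef, hwdef]
      dsimp only
      rw [hmatch]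
    refine ⟨A ∩ T ⁻¹' W', hTcont.isOpen_inter_preimage hAopen hW'open,
      ⟨hz0Ω, by show T z ∈ W'; rw [hTz]; exact hW'mem⟩, ?_⟩
    rintro z' ⟨hz'A, hz'T⟩ hQ'
    have hζΩ : z' 0 ∈ OmegaFun d e₀ := hz'A
    obtain ⟨hsζ, hqζ, hlamζ, hDyeζ⟩ := mem_Omega_iff.1 hζΩ
    obtain ⟨c', hc'X, hkey⟩ := section_member hsζ hqζ hlamζ (hQ' 0)
    have hchsq := ch_sq (e₀ := e₀) (ζ := z' 0) hlamζ
    have hchpos := ch_pos (e₀ := e₀) (ζ := z' 0) hlamζ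
    have hcosharsinh : Real.cosh (Real.arsinh (shFun d e₀ (z' 0))) = chFun d e₀ (z' 0) := by
      rw [Real.cosh_arsinh]
      rw [show 1 + (shFun d e₀ (z' 0))^2 = (chFun d e₀ (z' 0))^2 by linarith]
      exact Real.sqrt_sq hchpos.le
    have hExp : NormedSpace.exp
        ((((Real.arsinh (shFun d e₀ (z' 0)) : ℝ) : ℂ) * Complex.I)
          • toC d (ell d (avFun d (z' 0)) (bvFun d e₀ (z' 0))))
        = Emat d (shFun d e₀ (z' 0)) (chFun d e₀ (z' 0)) (avFun d (z' 0))
          (bvFun d e₀ (z' 0)) := by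
      rw [exp_eq_Emat (av_norm hsζ) (bv_norm hsζ hqζ) (av_bv_ortho hsζ),
        Real.sinh_arsinh, hcosharsinh]
    have hTj : ∀ j, T z' j ∈ XdC d := by
      intro j
      show formC d (T z' j) (T z' j) = 1
      rw [hTdef]
      dsimp only
      rw [Emat_preserves_form (av_norm hsζ) (bv_norm hsζ hqζ) (av_bv_ortho hsζ) _ _
        (by rw [neg_sq]; exact hchsq)]
      exact hQ' j.succ
    obtain ⟨hQ'', t'', M'', c'', ht'', hM'', hc'', heq''⟩ := hW'sub (T z') hz'T hTj
    refine ⟨hQ', Fin.cons (Real.arsinh (shFun d e₀ (z' 0))) t'',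
      Fin.cons (ell d (avFun d (z' 0)) (bvFun d e₀ (z' 0))) M'', Fin.cons c' c'',
      ?_, ?_, ?_, ?_⟩
    · intro j
      cases j using Fin.cases with
      | zero =>
        simp only [Fin.cons_zero]
        exact Real.arsinh_pos_iff.2 (sh_pos hlamζ)
      | succ k =>
        simpa only [Fin.cons_succ] using ht'' k
    · intro j
      cases j using Fin.cases with
      | zero =>
        simp only [Fin.cons_zero]
        exact ⟨avFun d (z' 0), bvFun d e₀ (z' 0), av_norm hsζ, bv_norm hsζ hqζ,
          av_bv_ortho hsζ, av_bv_kappa hsζ hDyeζ, rfl⟩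
      | succ k =>
        simpa only [Fin.cons_succ] using hM'' k
    · intro j
      cases j using Fin.cases with
      | zero =>
        exact hc'X
      | succ k =>
        simpa only [Fin.cons_succ] using hc'' k
    · intro j
      cases j using Fin.cases with
      | zero =>
        rw [prodUpTo_zero]
        simp only [Fin.cons_zero]
        rw [hExp]
        exact hkey.symm
      | succ k =>
        rw [prodUpTo_succ]
        simp only [Fin.cons_zero, Fin.cons_succ]
        rw [hExp, ← Matrix.mulVec_mulVec]
        rw [← heq'' k]
        rw [hTdef]
        dsimp only
        exact (Emat_mulVec_cancel (av_norm hsζ) (bv_norm hsζ hqζ) (av_bv_ortho hsζ) _ _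
          hchsq _).symm

/-- `Z_{n+}` is open in `(X_d^{(c)})ⁿ` for the topology induced from
`(ℂ^{d+1})ⁿ`, i.e. it is the trace on `(X_d^{(c)})ⁿ` of an open set. -/
theorem Znplus_isOpen (d n : ℕ) (hd : 2 ≤ d) (hn : 1 ≤ n) :
    ∃ U : Set (Fin n → (Fin (d+1) → ℂ)), IsOpen U ∧
      Znplus d n = U ∩ {z | ∀ j, z j ∈ XdC d} := by
  choose W hWopen hWmem hWsub using fun z (hz : z ∈ Znplus d n) =>
    Znplus_locally_open d n z hz
  refine ⟨⋃ (z : Fin n → (Fin (d+1) → ℂ)) (hz : z ∈ Znplus d n), W z hz,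
    isOpen_iUnion fun z => isOpen_iUnion fun hz => hWopen z hz, ?_⟩
  ext z'
  constructor
  · intro hz'
    exact ⟨Set.mem_iUnion.2 ⟨z', Set.mem_iUnion.2 ⟨hz', hWmem z' hz'⟩⟩, hz'.1⟩
  · rintro ⟨hU, hQ⟩
    rw [Set.mem_iUnion] at hU
    obtain ⟨z, hU⟩ := hU
    rw [Set.mem_iUnion] at hU
    obtain ⟨hz, hmem⟩ := hU
    exact hWsub z hz z' hmem hQ

end AdS
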